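/- Let u ⊆ {1,…,s} be nonempty and k ∈ {0,1,…,m−1}^{|u|}. Then Γ_{u,k} = Σ_{v⊆u} (−1)^{|v|} · #{ i ∈ {0,…,2^m−1} : C_{u,k}·i⃗ = 0 and ∇C_{u,k}·i⃗ = v⃗[u] }, where the sum is over all subsets v of u. -/

import Mathlib

open Finset

noncomputable section

/-- The bit vector `i⃗ ∈ F₂^m` of the integer `i = Σ_{ℓ=1}^m i_ℓ 2^{ℓ-1}`. -/
def bvec (m : ℕ) (i : ℕ) : Fin m → ZMod 2 :=
  fun ℓ => if Nat.testBit i ℓ.1 then 1 else 0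

/-- The `(r+1)`-st row (i.e. `r` with 0-indexing) of an `m × m` matrix over `F₂`,
as a vector in `F₂^m`; junk value `0` if `r ≥ m` (never used under the hypotheses below). -/
def rowAt (m : ℕ) (A : Matrix (Fin m) (Fin m) (ZMod 2)) (r : ℕ) : Fin m → ZMod 2 :=
  fun ℓ => if h : r < m then A ⟨r, h⟩ ℓ else 0

/-- The stacked matrix `C_{u,k}`: for each `j ∈ u`, the first `k j` rows of `C j`. -/
def stack {m s : ℕ} (C : Fin s → Matrix (Fin m) (Fin m) (ZMod 2))
    (u : Finset (Fin s)) (k : Fin s → ℕ) :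
    Matrix ((j : {x // x ∈ u}) × Fin (k j.1)) (Fin m) (ZMod 2) :=
  fun p => rowAt m (C p.1.1) p.2.1

/-- `∇C_{u,k}`: the matrix whose rows are the `(k j + 1)`-st rows (1-indexed) of `C j`, `j ∈ u`. -/
def grad {m s : ℕ} (C : Fin s → Matrix (Fin m) (Fin m) (ZMod 2))
    (u : Finset (Fin s)) (k : Fin s → ℕ) :
    Matrix {x // x ∈ u} (Fin m) (ZMod 2) :=
  fun j => rowAt m (C j.1) (k j.1)

/-- The coordinate `x_{ij} ∈ [0,1)` of the digital net generated by `C₁,…,C_s`: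
`x_{ij} = Σ_{ℓ=1}^m y_ℓ 2^{-ℓ}` where `y = C_j · i⃗` over `F₂`. -/
def pt {m s : ℕ} (C : Fin s → Matrix (Fin m) (Fin m) (ZMod 2)) (i : ℕ) (j : Fin s) : ℝ :=
  ∑ ℓ : Fin m, (((C j).mulVec (bvec m i) ℓ).val : ℝ) / 2 ^ (ℓ.1 + 1)

/-- The factor `N`: with `M(x,x') = max{k ∈ ℕ₀ : ⌊2^k x⌋ = ⌊2^k x'⌋}` (the number of matching
leading binary digits), `Nf x x' c` equals `1` if `M(x,x') > c` (equivalently the first `c+1`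
binary digits match), `-1` if `M(x,x') = c` (the first `c` digits match but not `c+1`), and
`0` if `M(x,x') < c`. -/
def Nf (x x' : ℝ) (c : ℕ) : ℤ :=
  if ⌊(2:ℝ) ^ (c + 1) * x⌋ = ⌊(2:ℝ) ^ (c + 1) * x'⌋ then 1
  else if ⌊(2:ℝ) ^ c * x⌋ = ⌊(2:ℝ) ^ c * x'⌋ then -1
  else 0

/-- The gain coefficient `Γ_{u,k} = 2^{-m} Σ_{i=0}^{2^m-1} Σ_{i'=0}^{2^m-1} ∏_{j∈u} N_{i,i',j}`. -/
def Gam {m s : ℕ} (C : Fin s → Matrix (Fin m) (Fin m) (ZMod 2))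
    (u : Finset (Fin s)) (k : Fin s → ℕ) : ℚ :=
  (2 ^ m : ℚ)⁻¹ * ∑ i ∈ Finset.range (2 ^ m), ∑ i' ∈ Finset.range (2 ^ m),
      ∏ j ∈ u, (Nf (pt C i j) (pt C i' j) (k j) : ℚ)

namespace Aux

/-- nat bit of a ZMod 2 vector, junk 0 out of range -/
def nbit {m : ℕ} (y : Fin m → ZMod 2) (ℓ : ℕ) : ℕ :=
  if h : ℓ < m then (y ⟨ℓ, h⟩).val else 0

lemma nbit_le_one {m : ℕ} (y : Fin m → ZMod 2) (ℓ : ℕ) : nbit y ℓ ≤ 1 := by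
  unfold nbit; split
  · exact Nat.lt_succ_iff.mp (ZMod.val_lt _)
  · omega

lemma sum_bits_lt (c : ℕ) (b : ℕ → ℕ) (hb : ∀ t, b t ≤ 1) :
    ∑ t ∈ range c, b t * 2 ^ t < 2 ^ c := by
  induction c with
  | zero => simp
  | succ c ih =>
    rw [Finset.sum_range_succ]
    have h1 : b c * 2 ^ c ≤ 2 ^ c := by
      have := hb c; nlinarith [pow_pos (show (0:ℕ) < 2 by norm_num) c]
    have : (2:ℕ) ^ (c+1) = 2 ^ c + 2 ^ c := by ring
    omega

lemma bits_unique (c : ℕ) (b b' : ℕ → ℕ) (hb : ∀ t, b t ≤ 1) (hb' : ∀ t, b' t ≤ 1)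
    (h : ∑ t ∈ range c, b t * 2 ^ t = ∑ t ∈ range c, b' t * 2 ^ t) :
    ∀ t < c, b t = b' t := by
  induction c with
  | zero => omega
  | succ c ih =>
    rw [Finset.sum_range_succ, Finset.sum_range_succ] at h
    have h1 := sum_bits_lt c b hb
    have h2 := sum_bits_lt c b' hb'
    have hbc := hb c; have hb'c := hb' c
    have hc : b c = b' c := by
      interval_cases hx : (b c) <;> interval_cases hy : (b' c) <;> omega
    have heq : ∑ t ∈ range c, b t * 2 ^ t = ∑ t ∈ range c, b' t * 2 ^ t := by
      rw [hc] at h; omega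
    intro t ht
    rcases Nat.lt_succ_iff_lt_or_eq.mp ht with h' | h'
    · exact ih heq t h'
    · rw [h']; exact hc

lemma tail_sum (c n : ℕ) (h : c ≤ n) :
    ∑ ℓ ∈ Finset.Ico c n, (1:ℝ)/2^(ℓ+1) = 1/2^c - 1/2^n := by
  induction n, h using Nat.le_induction with
  | base => simp
  | succ n hn ih =>
    rw [Finset.sum_Ico_succ_top hn, ih]
    have h2 : (2:ℝ)^(n+1) = 2^n * 2 := pow_succ 2 n
    have h0 : (2:ℝ)^n ≠ 0 := by positivity
    field_simp
    ring

def X {m : ℕ} (y : Fin m → ZMod 2) : ℝ := ∑ ℓ : Fin m, ((y ℓ).val : ℝ) / 2 ^ (ℓ.1 + 1)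

lemma X_eq {m : ℕ} (y : Fin m → ZMod 2) :
    X y = ∑ ℓ ∈ range m, (nbit y ℓ : ℝ) / 2 ^ (ℓ + 1) := by
  rw [X, ← Fin.sum_univ_eq_sum_range (fun ℓ => (nbit y ℓ : ℝ) / 2 ^ (ℓ + 1)) m]
  exact Finset.sum_congr rfl fun ℓ _ => by simp [nbit, ℓ.isLt]

lemma floor_X {m : ℕ} (y : Fin m → ZMod 2) (c : ℕ) (hc : c ≤ m) :
    ⌊(2:ℝ)^c * X y⌋ = ((∑ ℓ ∈ range c, nbit y ℓ * 2 ^ (c - 1 - ℓ) : ℕ) : ℤ) := by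
  rw [X_eq]
  have hsplit : ∑ ℓ ∈ range m, (nbit y ℓ : ℝ) / 2 ^ (ℓ + 1)
      = (∑ ℓ ∈ range c, (nbit y ℓ : ℝ) / 2 ^ (ℓ + 1))
        + ∑ ℓ ∈ Finset.Ico c m, (nbit y ℓ : ℝ) / 2 ^ (ℓ + 1) := by
    rw [Finset.range_eq_Ico, ← Finset.sum_Ico_consecutive _ (Nat.zero_le c) hc,
      ← Finset.range_eq_Ico]
  rw [hsplit, mul_add]
  set R : ℝ := (2:ℝ)^c * ∑ ℓ ∈ Finset.Ico c m, (nbit y ℓ : ℝ) / 2 ^ (ℓ + 1) with hR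
  have hA : (2:ℝ)^c * (∑ ℓ ∈ range c, (nbit y ℓ : ℝ) / 2 ^ (ℓ + 1))
      = ((∑ ℓ ∈ range c, nbit y ℓ * 2 ^ (c - 1 - ℓ) : ℕ) : ℝ) := by
    push_cast
    rw [Finset.mul_sum]
    refine Finset.sum_congr rfl fun ℓ hℓ => ?_
    have hℓc : ℓ < c := Finset.mem_range.mp hℓ
    have hpow : (2:ℝ) ^ (c - 1 - ℓ) * 2 ^ (ℓ + 1) = 2 ^ c := by
      rw [← pow_add]; congr 1; omega
    have h0 : (2:ℝ) ^ (ℓ + 1) ≠ 0 := by positivity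
    field_simp
    nlinarith [hpow]
  rw [hA]
  have hR0 : 0 ≤ R := by
    apply mul_nonneg (by positivity)
    exact Finset.sum_nonneg fun ℓ _ => by positivity
  have hR1 : R < 1 := by
    have hle : ∑ ℓ ∈ Finset.Ico c m, (nbit y ℓ : ℝ) / 2 ^ (ℓ + 1)
        ≤ ∑ ℓ ∈ Finset.Ico c m, (1:ℝ) / 2 ^ (ℓ + 1) := by
      refine Finset.sum_le_sum fun ℓ _ => ?_
      have := nbit_le_one y ℓ
      have : (nbit y ℓ : ℝ) ≤ 1 := by exact_mod_cast this
      gcongr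
    rw [tail_sum c m hc] at hle
    have h2c : (0:ℝ) < 2^c := by positivity
    have h2m : (0:ℝ) < 2^m := by positivity
    calc R ≤ (2:ℝ)^c * (1/2^c - 1/2^m) := by
            exact mul_le_mul_of_nonneg_left hle (by positivity)
      _ < 1 := by
            rw [mul_sub]
            have : (2:ℝ)^c * (1/2^c) = 1 := by field_simp
            rw [this]
            have : 0 < (2:ℝ)^c * (1/2^m) := by positivity
            linarith
  rw [Int.floor_eq_iff]
  constructor
  · push_cast; linarith
  · push_cast; linarith

lemma floor_eq_iff_bits {m : ℕ} (y y' : Fin m → ZMod 2) (c : ℕ) (hc : c ≤ m) :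
    ⌊(2:ℝ)^c * X y⌋ = ⌊(2:ℝ)^c * X y'⌋ ↔ ∀ ℓ : Fin m, ℓ.1 < c → y ℓ = y' ℓ := by
  rw [floor_X y c hc, floor_X y' c hc, Int.natCast_inj]
  constructor
  · intro h ℓ hℓ
    have h' : ∑ t ∈ range c, nbit y (c-1-t) * 2 ^ t = ∑ t ∈ range c, nbit y' (c-1-t) * 2 ^ t := by
      have e1 : ∑ t ∈ range c, nbit y (c-1-t) * 2 ^ t
          = ∑ ℓ ∈ range c, nbit y ℓ * 2 ^ (c - 1 - ℓ) := by
        rw [← Finset.sum_range_reflect (fun ℓ => nbit y ℓ * 2 ^ (c - 1 - ℓ)) c]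
        refine Finset.sum_congr rfl fun t ht => ?_
        have htc := Finset.mem_range.mp ht
        have he : c - 1 - (c - 1 - t) = t := by omega
        rw [he]
      have e2 : ∑ t ∈ range c, nbit y' (c-1-t) * 2 ^ t
          = ∑ ℓ ∈ range c, nbit y' ℓ * 2 ^ (c - 1 - ℓ) := by
        rw [← Finset.sum_range_reflect (fun ℓ => nbit y' ℓ * 2 ^ (c - 1 - ℓ)) c]
        refine Finset.sum_congr rfl fun t ht => ?_
        have htc := Finset.mem_range.mp ht
        have he : c - 1 - (c - 1 - t) = t := by omega
        rw [he]
      rw [e1, e2, h]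
    have hbits := bits_unique c _ _ (fun t => nbit_le_one y _) (fun t => nbit_le_one y' _) h'
    have := hbits (c - 1 - ℓ.1) (by omega)
    have hcc : c - 1 - (c - 1 - ℓ.1) = ℓ.1 := by omega
    rw [hcc] at this
    have hv : (y ℓ).val = (y' ℓ).val := by
      unfold nbit at this
      rw [dif_pos ℓ.isLt, dif_pos ℓ.isLt] at this
      simpa using this
    have hinj : ∀ a b : ZMod 2, a.val = b.val → a = b := by decide
    exact hinj _ _ hv
  · intro h
    refine Finset.sum_congr rfl fun ℓ hℓ => ?_
    have hℓc : ℓ < c := Finset.mem_range.mp hℓ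
    congr 1
    unfold nbit
    rw [dif_pos (lt_of_lt_of_le hℓc hc), dif_pos (lt_of_lt_of_le hℓc hc)]
    rw [h ⟨ℓ, lt_of_lt_of_le hℓc hc⟩ hℓc]

end Aux

namespace Aux

lemma bvec_xor (m i i' : ℕ) : bvec m (i ^^^ i') = bvec m i + bvec m i' := by
  funext ℓ
  simp only [bvec, Pi.add_apply, Nat.testBit_xor]
  cases h1 : Nat.testBit i ℓ.1 <;> cases h2 : Nat.testBit i' ℓ.1 <;> simp <;> decide

lemma rowAt_dot {m : ℕ} (A : Matrix (Fin m) (Fin m) (ZMod 2)) (r : ℕ) (h : r < m)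
    (w : Fin m → ZMod 2) :
    dotProduct (rowAt m A r) w = A.mulVec w ⟨r, h⟩ := by
  have hrow : rowAt m A r = fun ℓ => A ⟨r, h⟩ ℓ := funext fun ℓ => dif_pos h
  rw [hrow]
  rfl

/-- `Nf` in terms of the difference vector. -/
lemma Nf_eq {m s : ℕ} (C : Fin s → Matrix (Fin m) (Fin m) (ZMod 2))
    (j : Fin s) (c : ℕ) (hc : c + 1 ≤ m) (i i' : ℕ) :
    (Nf (pt C i j) (pt C i' j) c : ℚ) =
      (if ∀ r < c, dotProduct (rowAt m (C j) r) (bvec m (i ^^^ i')) = 0 then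
        (if dotProduct (rowAt m (C j) c) (bvec m (i ^^^ i')) = 0 then 1 else -1)
      else 0) := by
  set z : Fin m → ZMod 2 := (C j).mulVec (bvec m (i ^^^ i')) with hz
  have hdiff : ∀ ℓ : Fin m,
      ((C j).mulVec (bvec m i) ℓ = (C j).mulVec (bvec m i') ℓ ↔ z ℓ = 0) := by
    intro ℓ
    rw [hz, bvec_xor, Matrix.mulVec_add, Pi.add_apply]
    have : ∀ a b : ZMod 2, (a + b = 0 ↔ a = b) := by decide
    exact (this _ _).symm
  have hpt : pt C i j = X ((C j).mulVec (bvec m i)) := rfl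
  have hpt' : pt C i' j = X ((C j).mulVec (bvec m i')) := rfl
  have key : ∀ c' ≤ m, (⌊(2:ℝ)^c' * pt C i j⌋ = ⌊(2:ℝ)^c' * pt C i' j⌋ ↔
      ∀ ℓ : Fin m, ℓ.1 < c' → z ℓ = 0) := by
    intro c' hc'
    rw [hpt, hpt', floor_eq_iff_bits _ _ c' hc']
    exact forall_congr' fun ℓ => imp_congr_right fun _ => hdiff ℓ
  have hrz : ∀ r (h : r < m), dotProduct (rowAt m (C j) r) (bvec m (i ^^^ i')) = z ⟨r, h⟩ :=
    fun r h => rowAt_dot _ r h _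
  have hcond1 : (⌊(2:ℝ)^(c+1) * pt C i j⌋ = ⌊(2:ℝ)^(c+1) * pt C i' j⌋) ↔
      ((∀ r < c, dotProduct (rowAt m (C j) r) (bvec m (i ^^^ i')) = 0) ∧
        dotProduct (rowAt m (C j) c) (bvec m (i ^^^ i')) = 0) := by
    rw [key (c+1) hc]
    constructor
    · intro h
      refine ⟨fun r hr => ?_, ?_⟩
      · rw [hrz r (by omega)]; exact h _ (by simpa using Nat.lt_succ_of_lt hr)
      · rw [hrz c (by omega)]; exact h ⟨c, by omega⟩ (Nat.lt_succ_self c)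
    · rintro ⟨h1, h2⟩ ℓ hℓ
      rcases Nat.lt_succ_iff_lt_or_eq.mp hℓ with h' | h'
      · have h3 := h1 ℓ.1 h'
        rw [hrz ℓ.1 ℓ.isLt] at h3
        simpa using h3
      · rw [hrz c (by omega)] at h2
        have : ℓ = ⟨c, by omega⟩ := Fin.ext h'
        rw [this]; exact h2
  have hcond2 : (⌊(2:ℝ)^c * pt C i j⌋ = ⌊(2:ℝ)^c * pt C i' j⌋) ↔
      (∀ r < c, dotProduct (rowAt m (C j) r) (bvec m (i ^^^ i')) = 0) := by
    rw [key c (by omega)]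
    constructor
    · intro h r hr
      rw [hrz r (by omega)]; exact h _ (by simpa using hr)
    · intro h ℓ hℓ
      rw [← hrz ℓ.1 ℓ.isLt]; exact h ℓ.1 hℓ
  rw [Nf]
  by_cases hP : ∀ r < c, dotProduct (rowAt m (C j) r) (bvec m (i ^^^ i')) = 0
  · by_cases hQ : dotProduct (rowAt m (C j) c) (bvec m (i ^^^ i')) = 0
    · rw [if_pos (hcond1.mpr ⟨hP, hQ⟩), if_pos hP, if_pos hQ]; norm_num
    · rw [if_neg (fun h => hQ (hcond1.mp h).2), if_pos (hcond2.mpr hP), if_pos hP, if_neg hQ]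
      norm_num
  · rw [if_neg (fun h => hP (hcond1.mp h).1), if_neg (fun h => hP (hcond2.mp h)), if_neg hP]
    norm_num

def Fq {m s : ℕ} (C : Fin s → Matrix (Fin m) (Fin m) (ZMod 2))
    (u : Finset (Fin s)) (k : Fin s → ℕ) (d : ℕ) : ℚ :=
  if ∀ j ∈ u, ∀ r < k j, dotProduct (rowAt m (C j) r) (bvec m d) = 0 then
    ∏ j ∈ u, (if dotProduct (rowAt m (C j) (k j)) (bvec m d) = 0 then (1:ℚ) else -1)
  else 0

lemma prod_Nf {m s : ℕ} (C : Fin s → Matrix (Fin m) (Fin m) (ZMod 2))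
    (u : Finset (Fin s)) (k : Fin s → ℕ) (hkm : ∀ j ∈ u, k j + 1 ≤ m) (i i' : ℕ) :
    ∏ j ∈ u, (Nf (pt C i j) (pt C i' j) (k j) : ℚ) = Fq C u k (i ^^^ i') := by
  rw [Finset.prod_congr rfl (fun j hj => Nf_eq C j (k j) (hkm j hj) i i')]
  by_cases hP : ∀ j ∈ u, ∀ r < k j, dotProduct (rowAt m (C j) r) (bvec m (i ^^^ i')) = 0
  · rw [Fq, if_pos hP]
    exact Finset.prod_congr rfl fun j hj => if_pos (hP j hj)
  · rw [Fq, if_neg hP]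
    push_neg at hP
    obtain ⟨j, hj, r, hr, hne⟩ := hP
    refine Finset.prod_eq_zero hj ?_
    rw [if_neg]
    intro h
    exact hne (h r hr)

lemma sum_xor {m : ℕ} (f : ℕ → ℚ) (i : ℕ) (hi : i < 2 ^ m) :
    ∑ i' ∈ range (2 ^ m), f (i ^^^ i') = ∑ d ∈ range (2 ^ m), f d := by
  refine Finset.sum_nbij' (fun i' => i ^^^ i') (fun d => i ^^^ d) ?_ ?_ ?_ ?_ ?_
  · intro a ha
    simp only [Finset.mem_range] at *
    exact Nat.xor_lt_two_pow hi ha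
  · intro a ha
    simp only [Finset.mem_range] at *
    exact Nat.xor_lt_two_pow hi ha
  · intro a _; exact xor_cancel_left i a
  · intro a _; exact xor_cancel_left i a
  · intro a _; rfl

end Aux

namespace Aux

lemma zmod2_cases (a : ZMod 2) : a = 0 ∨ a = 1 := by revert a; decide

lemma inner_sum {m s : ℕ} (C : Fin s → Matrix (Fin m) (Fin m) (ZMod 2))
    (u : Finset (Fin s)) (k : Fin s → ℕ) (d : ℕ) :
    (∑ v ∈ u.powerset, (-1:ℚ) ^ v.card *
      (if ((stack C u k).mulVec (bvec m d) = 0 ∧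
           (grad C u k).mulVec (bvec m d) =
             fun j : {x // x ∈ u} => if j.1 ∈ v then 1 else 0) then (1:ℚ) else 0))
    = Fq C u k d := by
  set w : Fin m → ZMod 2 := bvec m d with hw
  have hgrad : ∀ (j : Fin s) (hj : j ∈ u),
      (grad C u k).mulVec w ⟨j, hj⟩ = dotProduct (rowAt m (C j) (k j)) w := fun _ _ => rfl
  have hstack : (stack C u k).mulVec w = 0 ↔
      ∀ j ∈ u, ∀ r < k j, dotProduct (rowAt m (C j) r) w = 0 := by
    constructor
    · intro h j hj r hr
      exact congrFun h ⟨⟨j, hj⟩, ⟨r, hr⟩⟩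
    · intro h
      funext p
      exact h p.1.1 p.1.2 p.2.1 p.2.2
  by_cases hP : ∀ j ∈ u, ∀ r < k j, dotProduct (rowAt m (C j) r) w = 0
  · rw [Fq, if_pos hP]
    set v₀ : Finset (Fin s) :=
      u.filter (fun j => ¬ dotProduct (rowAt m (C j) (k j)) w = 0) with hv₀
    have hv₀mem : v₀ ∈ u.powerset := Finset.mem_powerset.mpr (Finset.filter_subset _ _)
    rw [Finset.sum_eq_single_of_mem v₀ hv₀mem ?other]
    case other =>
      intro v hv hne
      rw [if_neg, mul_zero]
      rintro ⟨-, hgv⟩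
      apply hne
      ext j
      constructor
      · intro hjv
        have hju : j ∈ u := Finset.mem_powerset.mp hv hjv
        have := congrFun hgv ⟨j, hju⟩
        rw [hgrad j hju] at this
        rw [hv₀, Finset.mem_filter]
        refine ⟨hju, ?_⟩
        rw [this, if_pos hjv]
        exact one_ne_zero
      · intro hjv₀
        rw [hv₀, Finset.mem_filter] at hjv₀
        obtain ⟨hju, hne0⟩ := hjv₀
        have := congrFun hgv ⟨j, hju⟩
        rw [hgrad j hju] at this
        by_contra hjv
        rw [this, if_neg hjv] at hne0
        exact hne0 rfl
    · have hcond : (grad C u k).mulVec w =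
          fun j : {x // x ∈ u} => if j.1 ∈ v₀ then (1 : ZMod 2) else 0 := by
        funext j
        rw [hgrad j.1 j.2]
        rcases zmod2_cases (dotProduct (rowAt m (C j.1) (k j.1)) w) with h0 | h1
        · rw [h0, if_neg]
          rw [hv₀, Finset.mem_filter]
          rintro ⟨-, hne⟩
          exact hne h0
        · rw [h1, if_pos]
          rw [hv₀, Finset.mem_filter]
          exact ⟨j.2, by rw [h1]; exact one_ne_zero⟩
      rw [if_pos ⟨hstack.mpr hP, hcond⟩, mul_one]
      rw [Finset.prod_ite (fun _ => (1:ℚ)) (fun _ => (-1:ℚ)), Finset.prod_const_one,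
        Finset.prod_const, one_mul]
  · rw [Fq, if_neg hP]
    refine Finset.sum_eq_zero fun v hv => ?_
    rw [if_neg, mul_zero]
    rintro ⟨hs, -⟩
    exact hP (hstack.mp hs)

end Aux

theorem statement (m s : ℕ) (hm : 1 ≤ m) (hs : 1 ≤ s)
    (C : Fin s → Matrix (Fin m) (Fin m) (ZMod 2))
    (u : Finset (Fin s)) (hu : u.Nonempty)
    (k : Fin s → ℕ) (hk : ∀ j ∈ u, k j ≤ m - 1) :
    Gam C u k =
      ∑ v ∈ u.powerset, (-1 : ℚ) ^ v.card *
        (((Finset.range (2 ^ m)).filter (fun i =>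
            (stack C u k).mulVec (bvec m i) = 0 ∧
            (grad C u k).mulVec (bvec m i) =
              fun j : {x // x ∈ u} => if j.1 ∈ v then 1 else 0)).card : ℚ) := by
  have hkm : ∀ j ∈ u, k j + 1 ≤ m := fun j hj => by have := hk j hj; omega
  have lhs : Gam C u k = ∑ d ∈ range (2 ^ m), Aux.Fq C u k d := by
    rw [Gam]
    have h1 : ∀ i ∈ range (2 ^ m),
        (∑ i' ∈ range (2 ^ m), ∏ j ∈ u, (Nf (pt C i j) (pt C i' j) (k j) : ℚ))
          = ∑ d ∈ range (2 ^ m), Aux.Fq C u k d := by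
      intro i hi
      rw [Finset.sum_congr rfl (fun i' _ => Aux.prod_Nf C u k hkm i i')]
      exact Aux.sum_xor (Aux.Fq C u k) i (Finset.mem_range.mp hi)
    rw [Finset.sum_congr rfl h1, Finset.sum_const, Finset.card_range, nsmul_eq_mul,
      ← mul_assoc]
    push_cast
    rw [inv_mul_cancel₀ (by positivity : (2:ℚ)^m ≠ 0), one_mul]
  rw [lhs]
  symm
  calc
    ∑ v ∈ u.powerset, (-1 : ℚ) ^ v.card *
        (((Finset.range (2 ^ m)).filter (fun i =>
            (stack C u k).mulVec (bvec m i) = 0 ∧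
            (grad C u k).mulVec (bvec m i) =
              fun j : {x // x ∈ u} => if j.1 ∈ v then 1 else 0)).card : ℚ)
      = ∑ v ∈ u.powerset, ∑ d ∈ range (2 ^ m), (-1 : ℚ) ^ v.card *
          (if ((stack C u k).mulVec (bvec m d) = 0 ∧
             (grad C u k).mulVec (bvec m d) =
               fun j : {x // x ∈ u} => if j.1 ∈ v then 1 else 0) then (1:ℚ) else 0) := by
        refine Finset.sum_congr rfl fun v _ => ?_
        rw [← Finset.mul_sum, Finset.sum_boole]
    _ = ∑ d ∈ range (2 ^ m), ∑ v ∈ u.powerset, (-1 : ℚ) ^ v.card *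
          (if ((stack C u k).mulVec (bvec m d) = 0 ∧
             (grad C u k).mulVec (bvec m d) =
               fun j : {x // x ∈ u} => if j.1 ∈ v then 1 else 0) then (1:ℚ) else 0) :=
        Finset.sum_comm
    _ = ∑ d ∈ range (2 ^ m), Aux.Fq C u k d :=
        Finset.sum_congr rfl fun d _ => Aux.inner_sum C u k d


end
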